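/- Let p be an odd prime and let a, b be integers with 0 ≤ a ≤ p−1 and 0 ≤ b ≤ p−1. Define c ∈ ℤ/pℤ as follows: if b ≤ a, then c = (−1)^b · C(a, b) (the binomial coefficient, reduced mod p); if b > a, then c = Σ_{i=b−a}^{p−1−a} (−1)^{b+i+1} · (C(p,i)/p) · C(a+i, b), where C(p,i)/p is an integer for 1 ≤ i ≤ p−1 and the sum is reduced mod p. If b ≤ a or b ≥ p−2, then c ≠ 0 in ℤ/pℤ. -/

import Mathlib

/-- If `b ≤ a < p` then `C(a,b)` is non-zero mod `p`. -/
lemma keyterm_aux_choose_ne (p : ℕ) (hp : p.Prime) {a b : ℕ} (hab : b ≤ a) (ha : a < p) :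
    ((a.choose b : ℕ) : ZMod p) ≠ 0 := by
  rw [Ne, ZMod.natCast_eq_zero_iff]
  intro hd
  have hfac : a.choose b * (b.factorial * (a - b).factorial) = a.factorial := by
    rw [← Nat.choose_mul_factorial_mul_factorial hab]; ring
  have hdvd : a.choose b ∣ a.factorial := ⟨_, hfac.symm⟩
  have : p ∣ a.factorial := hd.trans hdvd
  have := (Nat.Prime.dvd_factorial hp).mp this
  omega

/-- `(C(p,i)/p) * i = C(p-1, i-1)` in `ℕ`. -/
lemma keyterm_aux_div (p : ℕ) (hp : p.Prime) {i : ℕ} (h1 : 1 ≤ i) (h2 : i ≤ p - 1) :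
    (p.choose i / p) * i = (p - 1).choose (i - 1) := by
  have hppos : 0 < p := hp.pos
  have hdvd : p ∣ p.choose i := Nat.Prime.dvd_choose_self hp (by omega) (by omega)
  have key : p * (p - 1).choose (i - 1) = p.choose i * i := by
    have h := Nat.add_one_mul_choose_eq (p - 1) (i - 1)
    simp -failIfUnchanged only [Nat.succ_eq_add_one] at h
    rwa [show p - 1 + 1 = p by omega, show i - 1 + 1 = i by omega] at h
  have heq : p * ((p.choose i / p) * i) = p * ((p - 1).choose (i - 1)) := by
    rw [← Nat.mul_assoc, Nat.mul_div_cancel' hdvd, key]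
  exact Nat.eq_of_mul_eq_mul_left hppos heq

/-- `(C(p,i)/p)` is non-zero mod `p` for `1 ≤ i ≤ p-1`. -/
lemma keyterm_aux_q_ne (p : ℕ) (hp : p.Prime) {i : ℕ} (h1 : 1 ≤ i) (h2 : i ≤ p - 1) :
    ((p.choose i / p : ℕ) : ZMod p) ≠ 0 := by
  intro h0
  have key := keyterm_aux_div p hp h1 h2
  have hcast : ((p.choose i / p : ℕ) : ZMod p) * (i : ℕ) = ((p - 1).choose (i - 1) : ℕ) := by
    rw [← Nat.cast_mul, key]
  rw [h0, zero_mul] at hcast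
  exact keyterm_aux_choose_ne p hp (by omega) (by omega) hcast.symm

/-- Non-vanishing of key-term coefficients (arithmetic core of Lemma 3.5):
if `b ≤ a` or `b ≥ p − 2`, then the coefficient `c` is non-zero in `ℤ/pℤ`. -/
theorem keyterm_coeff_ne_zero
    (p : ℕ) (hp : p.Prime) (hodd : Odd p)
    (a b : ℕ) (ha : a ≤ p - 1) (hb : b ≤ p - 1)
    (c : ZMod p)
    (hc : c = if b ≤ a then (-1) ^ b * (a.choose b : ZMod p)
      else ∑ i ∈ Finset.Icc (b - a) (p - 1 - a),
        (-1) ^ (b + i + 1) * ((p.choose i / p : ℕ) : ZMod p) *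
          ((a + i).choose b : ZMod p))
    (h : b ≤ a ∨ p - 2 ≤ b) :
    c ≠ 0 := by
  haveI : Fact p.Prime := ⟨hp⟩
  have hp3 : 3 ≤ p := by
    rcases hp.eq_two_or_odd' with h2 | _
    · exact absurd hodd (by rw [h2]; decide)
    · have h2 := hp.two_le
      rcases Nat.lt_or_ge p 3 with h3 | h3
      · interval_cases p
        · exact absurd hodd (by decide)
      · exact h3
  have hm1 : (-1 : ZMod p) ≠ 0 := neg_ne_zero.mpr one_ne_zero
  by_cases hba : b ≤ a
  · rw [if_pos hba] at hc
    subst hc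
    exact mul_ne_zero (pow_ne_zero _ hm1) (keyterm_aux_choose_ne p hp hba (by omega))
  · rw [if_neg hba] at hc
    have hab : a < b := by omega
    have hb2 : p - 2 ≤ b := by tauto
    rcases (by omega : b = p - 1 ∨ b = p - 2) with hb1 | hb1
    · -- single term case
      have hi : b - a = p - 1 - a := by omega
      rw [hi, Finset.Icc_self, Finset.sum_singleton] at hc
      have he : a + (p - 1 - a) = b := by omega
      rw [he, Nat.choose_self, Nat.cast_one, mul_one] at hc
      subst hc
      exact mul_ne_zero (pow_ne_zero _ hm1) (keyterm_aux_q_ne p hp (by omega) (by omega))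
    · -- two term case, b = p - 2
      set i₀ := b - a with hi₀
      have h1i₀ : 1 ≤ i₀ := by omega
      have hi₀p : i₀ + 1 ≤ p - 1 := by omega
      have hset : Finset.Icc (b - a) (p - 1 - a) = {i₀, i₀ + 1} := by
        ext x
        simp only [Finset.mem_Icc, Finset.mem_insert, Finset.mem_singleton]
        omega
      rw [hset, Finset.sum_pair (by omega)] at hc
      rw [show a + i₀ = b by omega, Nat.choose_self, Nat.cast_one,
        show a + (i₀ + 1) = p - 1 by omega,
        show (p - 1).choose b = p - 1 by
          rw [hb1, show p - 2 = (p - 1) - 1 by omega,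
            Nat.choose_symm (by omega : 1 ≤ p - 1), Nat.choose_one_right],
        show ((p - 1 : ℕ) : ZMod p) = -1 by
          rw [Nat.cast_sub (by omega : 1 ≤ p), ZMod.natCast_self, Nat.cast_one, zero_sub],
        show b + (i₀ + 1) + 1 = (b + i₀ + 1) + 1 by ring, pow_succ] at hc
      set q₀ : ZMod p := ((p.choose i₀ / p : ℕ) : ZMod p) with hq₀
      set q₁ : ZMod p := ((p.choose (i₀ + 1) / p : ℕ) : ZMod p) with hq₁
      have hc' : c = (-1 : ZMod p) ^ (b + i₀ + 1) * (q₀ + q₁) := by rw [hc]; ring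
      have hA : q₀ * (i₀ : ℕ) = (((p - 1).choose (i₀ - 1) : ℕ) : ZMod p) := by
        rw [hq₀, ← Nat.cast_mul, keyterm_aux_div p hp h1i₀ (by omega)]
      have hB : q₁ * ((i₀ + 1 : ℕ) : ZMod p) = (((p - 1).choose i₀ : ℕ) : ZMod p) := by
        rw [hq₁, ← Nat.cast_mul, keyterm_aux_div p hp (by omega) hi₀p,
          Nat.add_sub_cancel]
      have hPa : p.choose i₀ = (p - 1).choose (i₀ - 1) + (p - 1).choose i₀ := by
        have h := Nat.choose_succ_succ (p - 1) (i₀ - 1)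
        simp only [Nat.succ_eq_add_one] at h
        rwa [show p - 1 + 1 = p by omega, show i₀ - 1 + 1 = i₀ by omega] at h
      have hP0 : ((p.choose i₀ : ℕ) : ZMod p) = 0 := by
        rw [ZMod.natCast_eq_zero_iff]
        exact Nat.Prime.dvd_choose_self hp (by omega) (by omega)
      have hAB : (((p - 1).choose i₀ : ℕ) : ZMod p)
          = -(((p - 1).choose (i₀ - 1) : ℕ) : ZMod p) := by
        have := hP0
        rw [hPa, Nat.cast_add] at this
        linear_combination this
      have hq : q₀ + q₁ ≠ 0 := by
        intro h0
        have hAne : (((p - 1).choose (i₀ - 1) : ℕ) : ZMod p) ≠ 0 :=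
          keyterm_aux_choose_ne p hp (by omega) (by omega)
        apply hAne
        have hcomp : (q₀ + q₁) * ((i₀ : ℕ) * ((i₀ + 1 : ℕ) : ZMod p))
            = (((p - 1).choose (i₀ - 1) : ℕ) : ZMod p) := by
          have hcast1 : ((i₀ + 1 : ℕ) : ZMod p) = (i₀ : ℕ) + 1 := by push_cast; ring
          calc (q₀ + q₁) * ((i₀ : ℕ) * ((i₀ + 1 : ℕ) : ZMod p))
              = (q₀ * (i₀ : ℕ)) * ((i₀ + 1 : ℕ) : ZMod p)
                + (q₁ * ((i₀ + 1 : ℕ) : ZMod p)) * (i₀ : ℕ) := by ring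
            _ = (((p - 1).choose (i₀ - 1) : ℕ) : ZMod p) * ((i₀ + 1 : ℕ) : ZMod p)
                + (-(((p - 1).choose (i₀ - 1) : ℕ) : ZMod p)) * (i₀ : ℕ) := by
                rw [hA, hB, hAB]
            _ = (((p - 1).choose (i₀ - 1) : ℕ) : ZMod p)
                * (((i₀ + 1 : ℕ) : ZMod p) - (i₀ : ℕ)) := by ring
            _ = (((p - 1).choose (i₀ - 1) : ℕ) : ZMod p) := by rw [hcast1]; ring
        rw [h0, zero_mul] at hcomp
        exact hcomp.symm
      rw [hc']
      exact mul_ne_zero (pow_ne_zero _ hm1) hq
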